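/- Let U₁(n) = ∑ 2^{k(m)} over all maps m: ℤ_{≥1} → ℤ_{≥0} with ∑_j j·m(j) = n, where k(m) = |{ j even : m(j) ≠ 0 }|. Then the generating function satisfies ∑_{n≥0} U₁(n) t^n = (∏_{k≥1} 1/(1-t^k)) · ∏_{k≥1} (1+t^{2k}). -/

import Mathlib

open PowerSeries Finset

/-- The geometric series `1/(1-t^k)` as a formal power series over `ℤ`. -/
noncomputable def geom (k : ℕ) : PowerSeries ℤ :=
  PowerSeries.invOfUnit (1 - PowerSeries.X ^ k) 1

/-- The number of distinct even parts of a partition, i.e. `k(m) = |{j even : m(j) ≠ 0}|`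
for the multiplicity function `m` of the partition. -/
def evenPartsCount {n : ℕ} (l : Nat.Partition n) : ℕ :=
  (l.parts.toFinset.filter fun i => Even i).card

/-- `U₁ n = ∑ 2^{k(m)}` over all multiplicity functions `m : ℤ_{≥1} → ℤ_{≥0}` with
`∑_j j·m(j) = n` (i.e. over all partitions of `n`), where `k(m)` is the number of even
`j` with `m(j) ≠ 0`. -/
def U1 (n : ℕ) : ℕ := ∑ l : Nat.Partition n, 2 ^ evenPartsCount l

namespace U1Aux

open scoped Classical

noncomputable def indicatorSeries (α : Type*) [Semiring α] (s : Set ℕ) : PowerSeries α :=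
  PowerSeries.mk fun n => if n ∈ s then 1 else 0

theorem coeff_indicator {α : Type*} (s : Set ℕ) [Semiring α] (n : ℕ) :
    coeff n (indicatorSeries α s) = if n ∈ s then 1 else 0 :=
  coeff_mk _ _

theorem one_sub_mul_indicator (k : ℕ) (hk : 0 < k) :
    (1 - (X : PowerSeries ℤ) ^ k) * indicatorSeries ℤ {m | k ∣ m} = 1 := by
  have : (1 - (X : PowerSeries ℤ) ^ k) * indicatorSeries ℤ {m | k ∣ m} =
      indicatorSeries ℤ {m | k ∣ m} - indicatorSeries ℤ {m | k ∣ m} * X ^ k := by ring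
  rw [this]
  ext n
  rw [map_sub, coeff_indicator, PowerSeries.coeff_mul_X_pow', coeff_one]
  simp only [Set.mem_setOf_eq]
  rcases Nat.eq_zero_or_pos n with rfl | hn
  · simp [hk.ne', Nat.not_le.mpr hk]
  · rw [if_neg hn.ne']
    by_cases hdvd : k ∣ n
    · have hkn : k ≤ n := Nat.le_of_dvd hn hdvd
      rw [if_pos hdvd, if_pos hkn, coeff_indicator,
        if_pos (by exact (Nat.dvd_sub hdvd dvd_rfl : k ∣ n - k))]
      ring
    · rw [if_neg hdvd]
      split_ifs with hkn
      · rw [coeff_indicator, if_neg, sub_self]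
        intro hd
        exact hdvd (by simpa [Nat.sub_add_cancel hkn] using Nat.dvd_add hd (dvd_refl k))
      · simp
theorem geom_eq (i : ℕ) : geom (i + 1) = indicatorSeries ℤ {m | (i + 1) ∣ m} := by
  have hc : (constantCoeff (1 - (X : PowerSeries ℤ) ^ (i + 1)) : ℤ) = (1 : ℤˣ) := by
    simp [zero_pow (Nat.succ_ne_zero i)]
  have h2 : (1 - (X : PowerSeries ℤ) ^ (i + 1)) * geom (i + 1) = 1 :=
    PowerSeries.mul_invOfUnit _ 1 hc
  have h1 := one_sub_mul_indicator (i + 1) i.succ_pos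
  calc geom (i + 1) = geom (i + 1) * ((1 - X ^ (i + 1)) * indicatorSeries ℤ {m | (i + 1) ∣ m}) := by
        rw [h1, mul_one]
    _ = ((1 - X ^ (i + 1)) * geom (i + 1)) * indicatorSeries ℤ {m | (i + 1) ∣ m} := by ring
    _ = indicatorSeries ℤ {m | (i + 1) ∣ m} := by rw [h2, one_mul]


-- copied from Archive/Wiedijk100Theorems/Partition.lean
theorem partialGF_prop (α : Type*) [CommSemiring α] (n : ℕ) (s : Finset ℕ)
    (hs : ∀ i ∈ s, 0 < i) (c : ℕ → Set ℕ) (hc : ∀ i, i ∉ s → 0 ∈ c i) :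
    #{p : n.Partition | (∀ j, p.parts.count j ∈ c j) ∧ ∀ j ∈ p.parts, j ∈ s} =
      coeff n (∏ i ∈ s, indicatorSeries α ((· * i) '' c i)) := by
  simp_rw [coeff_prod, coeff_indicator, prod_boole, sum_boole]
  apply congr_arg
  simp only [mem_univ, forall_true_left, not_and, not_forall, exists_prop,
    Set.mem_image, not_exists]
  set φ : (a : Nat.Partition n) →
    a ∈ filter (fun p ↦ (∀ (j : ℕ), Multiset.count j p.parts ∈ c j) ∧ ∀ j ∈ p.parts, j ∈ s) univ →
    ℕ →₀ ℕ := fun p _ => {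
      toFun := fun i => Multiset.count i p.parts • i
      support := Finset.filter (fun i => i ≠ 0) p.parts.toFinset
      mem_support_toFun := fun a => by
        simp only [smul_eq_mul, ne_eq, mul_eq_zero, Multiset.count_eq_zero]
        rw [not_or, not_not]
        simp only [Multiset.mem_toFinset, not_not, mem_filter] }
  refine Finset.card_bij φ ?_ ?_ ?_
  · intro a ha
    simp only [φ, not_forall, not_exists, not_and, exists_prop, mem_filter]
    rw [mem_finsuppAntidiag]
    dsimp only [ne_eq, smul_eq_mul, id_eq, eq_mpr_eq_cast, le_eq_subset, Finsupp.coe_mk]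
    simp only [mem_univ, forall_true_left, not_and, not_forall, exists_prop,
      mem_filter, true_and] at ha
    refine ⟨⟨?_, fun i ↦ ?_⟩, fun i _ ↦ ⟨a.parts.count i, ha.1 i, rfl⟩⟩
    · conv_rhs => simp [← a.parts_sum]
      rw [sum_multiset_count_of_subset _ s]
      · simp only [smul_eq_mul]
      · intro i
        simp only [Multiset.mem_toFinset, not_not, mem_filter]
        apply ha.2
    · simp only [ne_eq, Multiset.mem_toFinset, not_not, mem_filter, and_imp]
      exact fun hi _ ↦ ha.2 i hi
  · intro p₁ hp₁ p₂ hp₂ h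
    apply Nat.Partition.ext
    simp only [true_and, mem_univ, mem_filter] at hp₁ hp₂
    ext i
    simp only [φ, ne_eq, Multiset.mem_toFinset, not_not, smul_eq_mul, Finsupp.mk.injEq] at h
    by_cases hi : i = 0
    · rw [hi]
      rw [Multiset.count_eq_zero_of_notMem]
      · rw [Multiset.count_eq_zero_of_notMem]
        intro a; exact Nat.lt_irrefl 0 (hs 0 (hp₂.2 0 a))
      intro a; exact Nat.lt_irrefl 0 (hs 0 (hp₁.2 0 a))
    · rw [← mul_left_inj' hi]
      rw [funext_iff] at h
      exact h.2 i
  · simp only [φ, mem_filter, mem_finsuppAntidiag, mem_univ, exists_prop, true_and, and_assoc]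
    rintro f ⟨hf, hf₃, hf₄⟩
    have hf' : f ∈ finsuppAntidiag s n := mem_finsuppAntidiag.mpr ⟨hf, hf₃⟩
    simp only [mem_finsuppAntidiag] at hf'
    refine ⟨⟨∑ i ∈ s, Multiset.replicate (f i / i) i, ?_, ?_⟩, ?_, ?_, ?_⟩
    · intro i hi
      simp only [exists_prop, Multiset.mem_sum, mem_map, Function.Embedding.coeFn_mk] at hi
      rcases hi with ⟨t, ht, z⟩
      apply hs
      rwa [Multiset.eq_of_mem_replicate z]
    · simp_rw [Multiset.sum_sum, Multiset.sum_replicate, Nat.nsmul_eq_mul]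
      rw [← hf'.1]
      refine sum_congr rfl fun i hi => Nat.div_mul_cancel ?_
      rcases hf₄ i hi with ⟨w, _, hw₂⟩
      rw [← hw₂]
      exact dvd_mul_left _ _
    · intro i
      simp_rw [Multiset.count_sum', Multiset.count_replicate, sum_ite_eq']
      split_ifs with h
      · rcases hf₄ i h with ⟨w, hw₁, hw₂⟩
        rwa [← hw₂, Nat.mul_div_cancel _ (hs i h)]
      · exact hc _ h
    · intro i hi
      rw [Multiset.mem_sum] at hi
      rcases hi with ⟨j, hj₁, hj₂⟩
      rwa [Multiset.eq_of_mem_replicate hj₂]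
    · ext i
      simp_rw [Multiset.count_sum', Multiset.count_replicate, sum_ite_eq']
      simp only [ne_eq, Multiset.mem_toFinset, not_not, smul_eq_mul, ite_mul,
        zero_mul, Finsupp.coe_mk]
      split_ifs with h
      · apply Nat.div_mul_cancel
        rcases hf₄ i h with ⟨w, _, hw₂⟩
        apply Dvd.intro_left _ hw₂
      · apply symm
        rw [← Finsupp.notMem_support_iff]
        exact notMem_mono hf'.2 h


theorem indicator_one {α : Type*} [Semiring α] (m : ℕ) (hm : 0 < m) :
    1 + (X : PowerSeries α) ^ m = indicatorSeries α {0, m} := by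
  ext n
  simp only [map_add, coeff_one, coeff_X_pow, coeff_indicator, Set.mem_insert_iff,
    Set.mem_singleton_iff]
  rcases Nat.eq_zero_or_pos n with rfl | hn
  · simp [hm.ne]
  · rw [if_neg hn.ne', zero_add]
    split_ifs with h1 h2 <;> simp_all

theorem mem_part_le {b : ℕ} (p : Nat.Partition b) {j : ℕ} (hj : j ∈ p.parts) : j ≤ b := by
  simpa [p.parts_sum] using Multiset.single_le_sum (fun _ _ => Nat.zero_le _) _ hj

theorem coeff_geom_prod (n a : ℕ) (ha : a ≤ n) :
    (Fintype.card (Nat.Partition a) : ℤ) =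
      coeff a (∏ k ∈ Finset.range (n + 1), geom (k + 1)) := by
  have h := partialGF_prop ℤ a ((range (n + 1)).map ⟨Nat.succ, Nat.succ_injective⟩)
    (fun i hi => by
      simp only [mem_map, Function.Embedding.coeFn_mk] at hi
      obtain ⟨x, -, rfl⟩ := hi; exact Nat.succ_pos x)
    (fun _ => Set.univ) (fun _ _ => trivial)
  rw [Finset.prod_map] at h
  convert h using 2
  · rfl
  · rw [← Finset.card_univ, eq_comm]
    congr 1
    rw [Finset.filter_eq_self]
    intro p _
    refine ⟨fun _ => trivial, fun j hj => ?_⟩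
    simp only [mem_map, Function.Embedding.coeFn_mk, mem_range]
    have h1 := p.parts_pos hj
    have h2 := mem_part_le p hj
    exact ⟨j - 1, by omega, by omega⟩
  · refine Finset.prod_congr rfl fun k _ => ?_
    rw [geom_eq]
    apply congrArg
    ext m
    simp only [Set.mem_image, Set.mem_univ, true_and, Set.mem_setOf_eq,
      Function.Embedding.coeFn_mk, Nat.succ_eq_add_one]
    constructor
    · rintro ⟨x, rfl⟩
      exact ⟨x, mul_comm _ _⟩
    · rintro ⟨x, rfl⟩
      exact Dvd.intro_left x rfl

theorem coeff_distinct_even_prod (n b : ℕ) (hb : b ≤ n) :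
    (#{p : b.Partition | p.parts.Nodup ∧ ∀ j ∈ p.parts, Even j} : ℤ) =
      coeff b (∏ k ∈ Finset.range (n + 1),
        (1 + (X : PowerSeries ℤ) ^ (2 * (k + 1)))) := by
  have hinj : Function.Injective fun i : ℕ => 2 * (i + 1) := fun x y h => by dsimp only at h; omega
  have h := partialGF_prop ℤ b ((range (n + 1)).map ⟨fun i => 2 * (i + 1), hinj⟩)
    (fun i hi => by
      simp only [mem_map, Function.Embedding.coeFn_mk] at hi
      obtain ⟨x, -, rfl⟩ := hi; omega)
    (fun _ => {0, 1}) (fun _ _ => Or.inl rfl)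
  rw [Finset.prod_map] at h
  convert h using 2
  · rfl
  · congr 1
    ext p
    simp only [mem_filter, mem_univ, true_and]
    constructor
    · rintro ⟨hnd, hev⟩
      refine ⟨fun j => ?_, fun j hj => ?_⟩
      · have := Multiset.nodup_iff_count_le_one.mp hnd j
        interval_cases h : p.parts.count j <;> simp
      · simp only [mem_map, Function.Embedding.coeFn_mk, mem_range]
        obtain ⟨t, rfl⟩ := hev j hj
        have h1 := p.parts_pos hj
        have h2 := mem_part_le p hj
        exact ⟨t - 1, by omega, by omega⟩
    · rintro ⟨hcnt, hmem⟩
      refine ⟨Multiset.nodup_iff_count_le_one.mpr fun j => ?_, fun j hj => ?_⟩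
      · rcases hcnt j with h | h <;> simp_all
      · have := hmem j hj
        simp only [mem_map, Function.Embedding.coeFn_mk, mem_range] at this
        obtain ⟨x, -, hx⟩ := this
        exact ⟨x + 1, by omega⟩
  · refine Finset.prod_congr rfl fun k _ => ?_
    rw [indicator_one _ (by omega : 0 < 2 * (k + 1))]
    apply congrArg
    rw [Set.image_pair]
    simp


theorem key (n : ℕ) :
    U1 n = ∑ ab ∈ antidiagonal n,
      Fintype.card (Nat.Partition ab.1) *
        #{p : Nat.Partition ab.2 | p.parts.Nodup ∧ ∀ j ∈ p.parts, Even j} := by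
  classical
  set T : Finset (Σ _l : Nat.Partition n, Finset ℕ) :=
    (univ : Finset (Nat.Partition n)).sigma
      (fun l => (l.parts.toFinset.filter fun i => Even i).powerset) with hT
  set R : Finset (Σ ab : ℕ × ℕ, Nat.Partition ab.1 × Nat.Partition ab.2) :=
    (antidiagonal n).sigma
      (fun ab => (univ : Finset (Nat.Partition ab.1)) ×ˢ
        Finset.filter (fun p : Nat.Partition ab.2 => p.parts.Nodup ∧ ∀ j ∈ p.parts, Even j)
          univ) with hR
  have hTcard : U1 n = #T := by
    rw [hT, Finset.card_sigma]
    simp [U1, evenPartsCount, Finset.card_powerset]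
  have hRcard : #R = ∑ ab ∈ antidiagonal n,
      Fintype.card (Nat.Partition ab.1) *
        #{p : Nat.Partition ab.2 | p.parts.Nodup ∧ ∀ j ∈ p.parts, Even j} := by
    rw [hR, Finset.card_sigma]
    refine Finset.sum_congr rfl fun ab _ => ?_
    rw [Finset.card_product, Fintype.card, Finset.card_univ]
  rw [hTcard, ← hRcard]
  -- the two encodings into pairs of multisets
  set f : (Σ _l : Nat.Partition n, Finset ℕ) → Multiset ℕ × Multiset ℕ :=
    fun x => (x.1.parts, x.2.val) with hf
  set g : (Σ ab : ℕ × ℕ, Nat.Partition ab.1 × Nat.Partition ab.2) →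
      Multiset ℕ × Multiset ℕ := fun x => (x.2.1.parts + x.2.2.parts, x.2.2.parts) with hg
  have hfinj : Function.Injective f := by
    rintro ⟨l, S⟩ ⟨l', S'⟩ hxy
    simp only [hf, Prod.mk.injEq] at hxy
    obtain ⟨h1, h2⟩ := hxy
    have hl : l = l' := Nat.Partition.ext h1
    subst hl
    have hS : S = S' := Finset.val_inj.mp h2
    subst hS
    rfl
  have hginj : Function.Injective g := by
    rintro ⟨⟨a, b⟩, p, q⟩ ⟨⟨a', b'⟩, p', q'⟩ hxy
    simp only [hg, Prod.mk.injEq] at hxy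
    obtain ⟨h1, h2⟩ := hxy
    have hb : b = b' := by
      rw [← show q.parts.sum = b from q.parts_sum, ← show q'.parts.sum = b' from q'.parts_sum, h2]
    subst hb
    rw [h2] at h1
    have hp : p.parts = p'.parts := add_right_cancel h1
    have ha : a = a' := by
      rw [← show p.parts.sum = a from p.parts_sum, ← show p'.parts.sum = a' from p'.parts_sum, hp]
    subst ha
    have hpp : p = p' := Nat.Partition.ext hp
    have hqq : q = q' := Nat.Partition.ext h2
    subst hpp; subst hqq
    rfl
  have himg : T.image f = R.image g := by
    ext z
    simp only [Finset.mem_image]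
    constructor
    · rintro ⟨⟨l, S⟩, hmem, rfl⟩
      simp only [hT, mem_sigma, mem_univ, true_and, mem_powerset] at hmem
      have hsub : S.val ≤ l.parts := by
        rw [Multiset.le_iff_count]
        intro j
        by_cases hj : j ∈ S
        · have h1 : S.val.count j = 1 := Multiset.count_eq_one_of_mem S.nodup hj
          have h2 : j ∈ l.parts := by
            have := hmem hj
            simp only [mem_filter, Multiset.mem_toFinset] at this
            exact this.1
          rw [h1]
          exact Multiset.one_le_count_iff_mem.mpr h2
        · rw [Multiset.count_eq_zero_of_notMem (by simpa using hj)]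
          exact Nat.zero_le _
      have hsplit : l.parts - S.val + S.val = l.parts := tsub_add_cancel_of_le hsub
      have hsum : (l.parts - S.val).sum + S.val.sum = n := by
        rw [← Multiset.sum_add, hsplit, l.parts_sum]
      have hposS : ∀ {i : ℕ}, i ∈ S.val → 0 < i := by
        intro i hi
        apply l.parts_pos
        have := hmem (by simpa using hi)
        simp only [mem_filter, Multiset.mem_toFinset] at this
        exact this.1
      refine ⟨⟨((l.parts - S.val).sum, S.val.sum),
        ⟨⟨l.parts - S.val, fun hi => l.parts_pos (Multiset.mem_of_le tsub_le_self hi), rfl⟩,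
         ⟨S.val, hposS, rfl⟩⟩⟩, ?_, ?_⟩
      · rw [hR, mem_sigma]
        refine ⟨mem_antidiagonal.mpr hsum, ?_⟩
        rw [mem_product]
        refine ⟨mem_univ _, mem_filter.mpr ⟨mem_univ _, S.nodup, fun j hj => ?_⟩⟩
        have := hmem (by simpa using hj)
        simp only [mem_filter, Multiset.mem_toFinset] at this
        exact this.2
      · show ((l.parts - S.val) + S.val, S.val) = (l.parts, S.val)
        rw [hsplit]
    · rintro ⟨⟨⟨a, b⟩, p, q⟩, hmem, rfl⟩
      rw [hR, mem_sigma, mem_product] at hmem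
      obtain ⟨hab', hmem2⟩ := hmem
      have hab : a + b = n := mem_antidiagonal.mp hab'
      obtain ⟨-, hnd, hev⟩ := mem_filter.mp hmem2.2
      have hqded : q.parts.dedup = q.parts := Multiset.dedup_eq_self.mpr hnd
      refine ⟨⟨⟨p.parts + q.parts, ?_, ?_⟩, q.parts.toFinset⟩, ?_, ?_⟩
      · intro i hi
        rcases Multiset.mem_add.mp hi with h | h
        · exact p.parts_pos h
        · exact q.parts_pos h
      · rw [Multiset.sum_add, p.parts_sum, q.parts_sum, hab]
      · rw [hT, mem_sigma]
        refine ⟨mem_univ _, mem_powerset.mpr ?_⟩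
        intro j hj
        simp only [Multiset.mem_toFinset] at hj
        simp only [mem_filter, Multiset.mem_toFinset, Multiset.mem_add]
        exact ⟨Or.inr hj, hev j hj⟩
      · show (p.parts + q.parts, (q.parts.toFinset).val) = (p.parts + q.parts, q.parts)
        rw [Multiset.toFinset_val, hqded]
  calc #T = #(T.image f) := (Finset.card_image_of_injective T hfinj).symm
    _ = #(R.image g) := by rw [himg]
    _ = #R := Finset.card_image_of_injective R hginj


end U1Aux

/-- `∑_{n≥0} U₁(n) t^n = (∏_{k≥1} 1/(1-t^k)) · ∏_{k≥1} (1+t^{2k})` as formal power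
series over `ℤ`, stated coefficientwise via stabilized truncations. -/
theorem U1_generating_function :
    ∀ n : ℕ,
      (U1 n : ℤ) =
        PowerSeries.coeff n ((∏ k ∈ Finset.range (n + 1), geom (k + 1)) *
          ∏ k ∈ Finset.range (n + 1), (1 + (PowerSeries.X : PowerSeries ℤ) ^ (2 * (k + 1)))) := by
  classical
  intro n
  rw [PowerSeries.coeff_mul]
  have step : ∀ ab ∈ antidiagonal n,
      PowerSeries.coeff ab.1 (∏ k ∈ Finset.range (n + 1), geom (k + 1)) *
        PowerSeries.coeff ab.2
          (∏ k ∈ Finset.range (n + 1), (1 + (PowerSeries.X : PowerSeries ℤ) ^ (2 * (k + 1)))) =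
      ((Fintype.card (Nat.Partition ab.1) *
        #{p : Nat.Partition ab.2 | p.parts.Nodup ∧ ∀ j ∈ p.parts, Even j} : ℕ) : ℤ) := by
    intro ab hab
    have h := Finset.HasAntidiagonal.mem_antidiagonal.mp hab
    rw [← U1Aux.coeff_geom_prod n ab.1 (by omega),
      ← U1Aux.coeff_distinct_even_prod n ab.2 (by omega)]
    push_cast
    ring
  rw [Finset.sum_congr rfl step, ← Nat.cast_sum]
  exact_mod_cast U1Aux.key n
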